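/- Let R be a 6-ring. Then χ(R) = ω(R), i.e., the chromatic number of a 6-ring equals its clique number. -/

import Mathlib

open SimpleGraph

namespace Paper

variable {V : Type*}

/-- `X` is complete to `Y` in `G`. -/
def CompleteTo (G : SimpleGraph V) (X Y : Set V) : Prop :=
  ∀ x ∈ X, ∀ y ∈ Y, G.Adj x y

/-- `X` is anticomplete to `Y` in `G`. -/
def AnticompleteTo (G : SimpleGraph V) (X Y : Set V) : Prop :=
  ∀ x ∈ X, ∀ y ∈ Y, ¬ G.Adj x y

/-- Closed neighborhood of `v` inside the induced subgraph of `G` on `S`. -/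
def cnbr (G : SimpleGraph V) (S : Set V) (v : V) : Set V :=
  {w | w ∈ S ∧ (w = v ∨ G.Adj v w)}

/-- Neighbors of `v` inside the set `X`. -/
def nbrIn (G : SimpleGraph V) (X : Set V) (v : V) : Set V :=
  {w | w ∈ X ∧ G.Adj v w}

/-- `G` is a complete graph. -/
def IsCompleteGraph (G : SimpleGraph V) : Prop :=
  ∀ u v : V, u ≠ v → G.Adj u v

/-- The induced subgraph of `G` on `S` admits a clique-cutset: a (possibly empty) clique
`C ⊊ S` such that removing `C` from the induced subgraph on `S` disconnects it. -/
def HasCliqueCutsetOn (G : SimpleGraph V) (S : Set V) : Prop :=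
  ∃ C : Set V, C ⊆ S ∧ C ≠ S ∧ G.IsClique C ∧ ¬ (G.induce (S \ C)).Connected

def HasCliqueCutset (G : SimpleGraph V) : Prop :=
  HasCliqueCutsetOn G Set.univ

/-- The induced subgraph of `G` on `S` contains an induced copy of `H`. -/
def ContainsInducedOn {W : Type*} (G : SimpleGraph V) (S : Set V) (H : SimpleGraph W) : Prop :=
  ∃ f : W ↪ V, (∀ a, f a ∈ S) ∧ ∀ a b, G.Adj (f a) (f b) ↔ H.Adj a b

/-- The induced subgraph of `G` on `S` is `H`-free. -/
def FreeOn {W : Type*} (G : SimpleGraph V) (S : Set V) (H : SimpleGraph W) : Prop :=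
  ¬ ContainsInducedOn G S H

/-- `G` is `H`-free. -/
def Free {W : Type*} (G : SimpleGraph V) (H : SimpleGraph W) : Prop :=
  FreeOn G Set.univ H

/-- The path on `n` vertices. -/
def pathG (n : ℕ) : SimpleGraph (Fin n) :=
  SimpleGraph.fromRel (fun i j => (i : ℕ) + 1 = (j : ℕ))

/-- The cycle on `n` vertices. -/
def cycG (n : ℕ) : SimpleGraph (ZMod n) :=
  SimpleGraph.fromRel (fun i j => i + 1 = j)

/-- The graph `Θ₃ʳ`: `r` internally disjoint three-edge paths meeting at their endpoints.
`Sum.inl 0` and `Sum.inl 1` are the two endpoints, and `Sum.inr (i, 0)`, `Sum.inr (i, 1)`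
are the internal vertices of the `i`-th path. -/
def thetaG (r : ℕ) : SimpleGraph (Fin 2 ⊕ Fin r × Fin 2) :=
  SimpleGraph.fromRel (fun x y =>
    (∃ i : Fin r, x = Sum.inl 0 ∧ y = Sum.inr (i, 0)) ∨
    (∃ i : Fin r, x = Sum.inr (i, 0) ∧ y = Sum.inr (i, 1)) ∨
    (∃ i : Fin r, x = Sum.inr (i, 1) ∧ y = Sum.inl 1))

/-- `B` is the vertex set of an anticomponent of `G`. -/
def IsAnticomponent (G : SimpleGraph V) (B : Set V) : Prop :=
  ∃ c : Gᶜ.ConnectedComponent, B = c.supp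

/-- `G` has exactly one nontrivial anticomponent, and that anticomponent satisfies `P`. -/
def ExactlyOneNontrivialAnticomponent (G : SimpleGraph V) (P : Set V → Prop) : Prop :=
  ∃ B : Set V, IsAnticomponent G B ∧ B.Nontrivial ∧
    (∀ B' : Set V, IsAnticomponent G B' → B'.Nontrivial → B' = B) ∧ P B

/-- The stability number of the induced subgraph of `G` on `S`. -/
noncomputable def alphaOn (G : SimpleGraph V) (S : Set V) : ℕ :=
  sSup {n | ∃ T : Finset V, ↑T ⊆ S ∧ (∀ x ∈ T, ∀ y ∈ T, x ≠ y → ¬ G.Adj x y) ∧ T.card = n}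

/-- The clique number of `G`. -/
noncomputable def cliqueNumber (G : SimpleGraph V) : ℕ :=
  sSup {n | ∃ T : Finset V, G.IsNClique n T}

/-- A 7-hole in `G`, given by an injective map `x : ZMod 7 → V` whose image induces a `C₇`
traversed in the order `x 0, x 1, …, x 6, x 0`. -/
def IsHole7 (G : SimpleGraph V) (x : ZMod 7 → V) : Prop :=
  Function.Injective x ∧ ∀ i j, G.Adj (x i) (x j) ↔ (i - j = 1 ∨ j - i = 1)

/-- The set `A_i^*`: vertices of `A i` anticomplete to `A (i-2) ∪ A (i+2)`. -/
def braceletStar (G : SimpleGraph V) (A : ZMod 7 → Set V) (i : ZMod 7) : Set V :=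
  {v | v ∈ A i ∧ ∀ w ∈ A (i - 2) ∪ A (i + 2), ¬ G.Adj v w}

/-- The set `A_i^+`: vertices of `A i` anticomplete to `A (i-2)` with a neighbor in `A (i+2)`. -/
def braceletPlus (G : SimpleGraph V) (A : ZMod 7 → Set V) (i : ZMod 7) : Set V :=
  {v | v ∈ A i ∧ (∀ w ∈ A (i - 2), ¬ G.Adj v w) ∧ ∃ w ∈ A (i + 2), G.Adj v w}

/-- The set `A_i^-`: vertices of `A i` anticomplete to `A (i+2)` with a neighbor in `A (i-2)`. -/
def braceletMinus (G : SimpleGraph V) (A : ZMod 7 → Set V) (i : ZMod 7) : Set V :=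
  {v | v ∈ A i ∧ (∀ w ∈ A (i + 2), ¬ G.Adj v w) ∧ ∃ w ∈ A (i - 2), G.Adj v w}

/-- The induced subgraph of `G` on `S` is a 7-bracelet with good pair `(A, istar)`. -/
def IsGoodPairOn (G : SimpleGraph V) (S : Set V) (A : ZMod 7 → Set V) (istar : ZMod 7) : Prop :=
  -- `A` is a partition of `S`
  (⋃ i, A i) = S ∧
  (∀ i j : ZMod 7, i ≠ j → Disjoint (A i) (A j)) ∧
  -- (I)
  (∀ i, (A i).Nonempty ∧ G.IsClique (A i) ∧
    CompleteTo G (A i) (A (i - 1) ∪ A (i + 1)) ∧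
    AnticompleteTo G (A i) (A (i - 3) ∪ A (i + 3))) ∧
  -- (II) (a)-(c): `A i` is partitioned into the canonical sets `A_i^*, A_i^+, A_i^-`
  (∀ i, A i = braceletStar G A i ∪ braceletPlus G A i ∪ braceletMinus G A i) ∧
  -- (II) (d),(e): closed neighborhoods (in the induced subgraph on `S`) of vertices of
  -- `A_i^+` (resp. `A_i^-`) form a chain under inclusion
  (∀ i, ∀ u ∈ braceletPlus G A i, ∀ v ∈ braceletPlus G A i,
    cnbr G S u ⊆ cnbr G S v ∨ cnbr G S v ⊆ cnbr G S u) ∧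
  (∀ i, ∀ u ∈ braceletMinus G A i, ∀ v ∈ braceletMinus G A i,
    cnbr G S u ⊆ cnbr G S v ∨ cnbr G S v ⊆ cnbr G S u) ∧
  -- (II) (f)
  (∀ i, ∃ v ∈ A i, (∃ w ∈ A (i - 2), ¬ G.Adj v w) ∧ ∃ w ∈ A (i + 2), ¬ G.Adj v w) ∧
  -- (III)
  braceletPlus G A (istar - 3) = ∅ ∧ braceletMinus G A (istar - 3) = ∅ ∧
  braceletPlus G A (istar + 3) = ∅ ∧ braceletMinus G A (istar + 3) = ∅ ∧
  -- (IV)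
  braceletMinus G A (istar - 2) = ∅ ∧ braceletPlus G A (istar + 2) = ∅ ∧
  -- (V)
  braceletMinus G A (istar - 1) = ∅ ∧ braceletPlus G A (istar + 1) = ∅

def IsGoodPartitionOn (G : SimpleGraph V) (S : Set V) (A : ZMod 7 → Set V) : Prop :=
  ∃ istar, IsGoodPairOn G S A istar

/-- The induced subgraph of `G` on `S` is a 7-bracelet. -/
def IsBracelet7On (G : SimpleGraph V) (S : Set V) : Prop :=
  ∃ A istar, IsGoodPairOn G S A istar

/-- The induced subgraph of `G` on `S` is a quasi-7-bracelet with good partition `A`. -/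
def IsQuasiGoodPartitionOn (G : SimpleGraph V) (S : Set V) (A : ZMod 7 → Set V) : Prop :=
  (⋃ i, A i) = S ∧
  (∀ i j : ZMod 7, i ≠ j → Disjoint (A i) (A j)) ∧
  (∀ i, (A i).Nonempty ∧ G.IsClique (A i) ∧
    CompleteTo G (A i) (A (i - 1) ∪ A (i + 1)) ∧
    AnticompleteTo G (A i) (A (i - 3) ∪ A (i + 3))) ∧
  (∀ i, ∃ v ∈ A i, (∃ w ∈ A (i - 2), ¬ G.Adj v w) ∧ ∃ w ∈ A (i + 2), ¬ G.Adj v w)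

/-- The induced subgraph of `G` on `S` is a thickened emerald with good triple `(A, C, istar)`.
Here `Em, Ep, Ps, Pm, Ms, Mp` play the roles of
`A_{i*}^-, A_{i*}^+, A_{i*+2}^*, A_{i*+2}^-, A_{i*-2}^*, A_{i*-2}^+`. -/
def IsGoodTripleTEOn (G : SimpleGraph V) (S : Set V) (A : ZMod 7 → Set V)
    (C : Set V) (istar : ZMod 7) : Prop :=
  (C ∪ ⋃ i, A i) = S ∧
  (∀ i, Disjoint C (A i)) ∧
  (∀ i j : ZMod 7, i ≠ j → Disjoint (A i) (A j)) ∧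
  C.Nonempty ∧ G.IsClique C ∧
  (∀ i, (A i).Nonempty ∧ G.IsClique (A i)) ∧
  (∀ i, CompleteTo G (A i) (A (i - 1) ∪ A (i + 1)) ∧
        AnticompleteTo G (A i) (A (i - 3) ∪ A (i + 3))) ∧
  (∀ i, (i = istar - 3 ∨ i = istar - 1 ∨ i = istar + 1 ∨ i = istar + 3) →
        AnticompleteTo G (A i) (A (i - 2) ∪ A (i + 2))) ∧
  ∃ Em Ep Ps Pm Ms Mp : Set V,
    Em.Nonempty ∧ Ep.Nonempty ∧ Ps.Nonempty ∧ Pm.Nonempty ∧ Ms.Nonempty ∧ Mp.Nonempty ∧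
    List.Pairwise (fun X Y : Set V => Disjoint X Y) [Em, Ep, Ps, Pm, Ms, Mp] ∧
    G.IsClique Em ∧ G.IsClique Ep ∧ G.IsClique Ps ∧ G.IsClique Pm ∧
    G.IsClique Ms ∧ G.IsClique Mp ∧
    A istar = Em ∪ Ep ∧
    A (istar + 2) = Ps ∪ Pm ∧
    A (istar - 2) = Ms ∪ Mp ∧
    CompleteTo G Em Mp ∧ AnticompleteTo G Em (Ms ∪ A (istar + 2)) ∧
    CompleteTo G Ep Pm ∧ AnticompleteTo G Ep (Ps ∪ A (istar - 2)) ∧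
    CompleteTo G C (Ps ∪ A (istar + 3) ∪ A (istar - 3) ∪ Ms) ∧
    AnticompleteTo G C (Mp ∪ A (istar - 1) ∪ A istar ∪ A (istar + 1) ∪ Pm)

/-- The induced subgraph of `G` on `S` is a thickened emerald. -/
def IsThickenedEmeraldOn (G : SimpleGraph V) (S : Set V) : Prop :=
  ∃ A C istar, IsGoodTripleTEOn G S A C istar

/-- The neighborhoods in `Y` of the vertices of `X` form a chain under inclusion whose
largest element is all of `Y`: this encodes "`X` can be ordered as `x_1, …, x_t` so that
`N[x_t] ∩ Y ⊆ ⋯ ⊆ N[x_1] ∩ Y = Y`". -/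
def ChainedPairTo (G : SimpleGraph V) (X Y : Set V) : Prop :=
  (∀ u ∈ X, ∀ v ∈ X, nbrIn G Y u ⊆ nbrIn G Y v ∨ nbrIn G Y v ⊆ nbrIn G Y u) ∧
  (∃ u ∈ X, ∀ y ∈ Y, G.Adj u y)

/-- The induced subgraph of `G` on `S` is an `r`-lantern with good partition
`(A, Bs 0, …, Bs (r-1), Cs 0, …, Cs (r-1), D)`, where the index `0 : Fin r` plays the role
of the index `1` of the paper. -/
def IsLanternPartitionOn (G : SimpleGraph V) (S : Set V) (r : ℕ)
    (A D : Set V) (Bs Cs : Fin r → Set V) : Prop :=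
  (A ∪ D ∪ (⋃ i, Bs i) ∪ (⋃ i, Cs i)) = S ∧
  Disjoint A D ∧
  (∀ i, Disjoint A (Bs i) ∧ Disjoint A (Cs i) ∧ Disjoint D (Bs i) ∧ Disjoint D (Cs i)) ∧
  (∀ i j, Disjoint (Bs i) (Cs j)) ∧
  (∀ i j, i ≠ j → Disjoint (Bs i) (Bs j) ∧ Disjoint (Cs i) (Cs j)) ∧
  A.Nonempty ∧ D.Nonempty ∧ (∀ i, (Bs i).Nonempty ∧ (Cs i).Nonempty) ∧
  G.IsClique A ∧ G.IsClique D ∧ (∀ i, G.IsClique (Bs i) ∧ G.IsClique (Cs i)) ∧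
  AnticompleteTo G A D ∧
  (∀ i, CompleteTo G A (Bs i) ∧ AnticompleteTo G A (Cs i)) ∧
  (∀ i, CompleteTo G D (Cs i) ∧ AnticompleteTo G D (Bs i)) ∧
  (∀ i : Fin r, i.val = 0 → ChainedPairTo G (Bs i) (Cs i) ∧ ChainedPairTo G (Cs i) (Bs i)) ∧
  (∀ i : Fin r, i.val ≠ 0 → CompleteTo G (Bs i) (Cs i)) ∧
  (∀ i j, i ≠ j → AnticompleteTo G (Bs i ∪ Cs i) (Bs j ∪ Cs j))

/-- The induced subgraph of `G` on `S` is a lantern. -/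
def IsLanternOn (G : SimpleGraph V) (S : Set V) : Prop :=
  ∃ r : ℕ, 3 ≤ r ∧ ∃ (A D : Set V) (Bs Cs : Fin r → Set V),
    IsLanternPartitionOn G S r A D Bs Cs

/-- The induced subgraph of `G` on `S` is a thickened `Θ₃ʳ` with good partition
`(A, Bs, Cs, D)`. -/
def IsThickThetaPartitionOn (G : SimpleGraph V) (S : Set V) (r : ℕ)
    (A D : Set V) (Bs Cs : Fin r → Set V) : Prop :=
  (A ∪ D ∪ (⋃ i, Bs i) ∪ (⋃ i, Cs i)) = S ∧
  Disjoint A D ∧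
  (∀ i, Disjoint A (Bs i) ∧ Disjoint A (Cs i) ∧ Disjoint D (Bs i) ∧ Disjoint D (Cs i)) ∧
  (∀ i j, Disjoint (Bs i) (Cs j)) ∧
  (∀ i j, i ≠ j → Disjoint (Bs i) (Bs j) ∧ Disjoint (Cs i) (Cs j)) ∧
  A.Nonempty ∧ D.Nonempty ∧ (∀ i, (Bs i).Nonempty ∧ (Cs i).Nonempty) ∧
  G.IsClique A ∧ G.IsClique D ∧ (∀ i, G.IsClique (Bs i) ∧ G.IsClique (Cs i)) ∧
  AnticompleteTo G A D ∧
  (∀ i, CompleteTo G A (Bs i) ∧ AnticompleteTo G A (Cs i)) ∧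
  (∀ i, CompleteTo G D (Cs i) ∧ AnticompleteTo G D (Bs i)) ∧
  (∀ i, CompleteTo G (Bs i) (Cs i)) ∧
  (∀ i j, i ≠ j → AnticompleteTo G (Bs i ∪ Cs i) (Bs j ∪ Cs j))

/-- The induced subgraph of `G` on `S` is a `k`-ring with partition `X`. -/
def IsRingPartitionOn (G : SimpleGraph V) (S : Set V) (k : ℕ) (X : ZMod k → Set V) : Prop :=
  (⋃ i, X i) = S ∧
  (∀ i j : ZMod k, i ≠ j → Disjoint (X i) (X j)) ∧
  (∀ i, (X i).Nonempty) ∧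
  (∀ i, ∀ u ∈ X i, X i ⊆ cnbr G S u) ∧
  (∀ i, ∀ u ∈ X i, cnbr G S u ⊆ X (i - 1) ∪ X i ∪ X (i + 1)) ∧
  (∀ i, ∃ u ∈ X i, cnbr G S u = X (i - 1) ∪ X i ∪ X (i + 1)) ∧
  (∀ i, ∀ u ∈ X i, ∀ v ∈ X i, cnbr G S u ⊆ cnbr G S v ∨ cnbr G S v ⊆ cnbr G S u)

/-- The induced subgraph of `G` on `S` is a ring (of some length `k ≥ 4`). -/
def IsRingOn (G : SimpleGraph V) (S : Set V) : Prop :=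
  ∃ k : ℕ, 4 ≤ k ∧ ∃ X : ZMod k → Set V, IsRingPartitionOn G S k X

/-- The induced subgraph of `G` on `S` is a 6-ring. -/
def IsRing6On (G : SimpleGraph V) (S : Set V) : Prop :=
  ∃ X : ZMod 6 → Set V, IsRingPartitionOn G S 6 X

/-- The induced subgraph of `G` on `S` is a 6-wreath. -/
def IsWreath6On (G : SimpleGraph V) (S : Set V) : Prop :=
  ∃ X : ZMod 6 → Set V, IsRingPartitionOn G S 6 X ∧
    CompleteTo G (X 0) (X 1) ∧ CompleteTo G (X 2) (X 3) ∧ CompleteTo G (X 4) (X 5)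

/-- The induced subgraph of `G` on `S` is a 6-crown with good triple `(C, D, istar)`. -/
def IsCrownTripleOn (G : SimpleGraph V) (S : Set V) (C D : ZMod 6 → Set V)
    (istar : ZMod 6) : Prop :=
  ((⋃ i, C i) ∪ (⋃ i, D i)) = S ∧
  (∀ i j : ZMod 6, i ≠ j → Disjoint (C i) (C j) ∧ Disjoint (D i) (D j)) ∧
  (∀ i j : ZMod 6, Disjoint (C i) (D j)) ∧
  (∀ i, G.IsClique (C i) ∧ G.IsClique (D i)) ∧
  (∀ i, (C i).Nonempty) ∧
  D (istar - 2) = ∅ ∧ D (istar - 1) = ∅ ∧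
  (D (istar + 1)).Nonempty ∧ (D (istar + 2)).Nonempty ∧ (D (istar + 3)).Nonempty ∧
  (∀ i, CompleteTo G (C i) (C (i - 1) ∪ C (i + 1)) ∧
        AnticompleteTo G (C i) (C (i + 2) ∪ C (i + 3) ∪ C (i + 4))) ∧
  (∀ i, CompleteTo G (D i) (C (i - 1) ∪ C i ∪ C (i + 1)) ∧
        AnticompleteTo G (D i) (C (i + 2) ∪ C (i + 3) ∪ C (i + 4))) ∧
  (∀ i j : ZMod 6, i ≠ j → AnticompleteTo G (D i) (D j))

/-- The induced subgraph of `G` on `S` is a 6-crown. -/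
def IsCrown6On (G : SimpleGraph V) (S : Set V) : Prop :=
  ∃ C D istar, IsCrownTripleOn G S C D istar

/-- The set `X`: vertices outside `S` mixed on `S`. -/
def setX (G : SimpleGraph V) (S : Set V) : Set V :=
  {v | v ∉ S ∧ (∃ w ∈ S, G.Adj v w) ∧ ∃ w ∈ S, ¬ G.Adj v w}

/-- The set `L_A`: vertices of `X` with a neighbor in `A`, anticomplete to `S \ A`. -/
def setL (G : SimpleGraph V) (S A : Set V) : Set V :=
  {v | v ∈ setX G S ∧ (∃ w ∈ A, G.Adj v w) ∧ ∀ w ∈ S \ A, ¬ G.Adj v w}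

/-- The set `T_{B_i}` (for `A := A`, `Bi := B_i`, `Ci := C_i`): vertices of `X` complete to
`A ∪ B_i`, mixed on `C_i`, anticomplete to `S \ (A ∪ B_i ∪ C_i)`. -/
def setT (G : SimpleGraph V) (S A Bi Ci : Set V) : Set V :=
  {v | v ∈ setX G S ∧ (∀ w ∈ A ∪ Bi, G.Adj v w) ∧
       (∃ w ∈ Ci, G.Adj v w) ∧ (∃ w ∈ Ci, ¬ G.Adj v w) ∧
       ∀ w ∈ S \ (A ∪ Bi ∪ Ci), ¬ G.Adj v w}

/-- The set `R_{B_i}`: vertices of `X` complete to `A`, with a neighbor in `B_i`,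
anticomplete to `S \ (A ∪ B_i)`. -/
def setR (G : SimpleGraph V) (S A Bi : Set V) : Set V :=
  {v | v ∈ setX G S ∧ (∀ w ∈ A, G.Adj v w) ∧ (∃ w ∈ Bi, G.Adj v w) ∧
       ∀ w ∈ S \ (A ∪ Bi), ¬ G.Adj v w}

end Paper

open Paper

open List in

lemma exists_sorted_list {α : Type*} (A : Finset α) (r : α → α → Prop)
    (htrans : ∀ a b c, r a b → r b c → r a c)
    (htot : ∀ u ∈ A, ∀ v ∈ A, r u v ∨ r v u) :
    ∃ L : List α, L.Nodup ∧ (∀ v, v ∈ L ↔ v ∈ A) ∧ L.Pairwise r := by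
  classical
  let le : {x // x ∈ A} → {x // x ∈ A} → Bool := fun a b => decide (r a b)
  let l0 : List {x // x ∈ A} := A.attach.toList
  have htr : ∀ a b c, le a b → le b c → le a c := by
    intro a b c hab hbc
    simp only [le, decide_eq_true_eq] at *
    exact htrans _ _ _ hab hbc
  have hto : ∀ a b, le a b || le b a := by
    intro a b
    simp only [le, Bool.or_eq_true, decide_eq_true_eq]
    exact htot _ a.2 _ b.2
  have hperm : l0.mergeSort le ~ l0 := List.mergeSort_perm l0 le
  refine ⟨(l0.mergeSort le).map Subtype.val, ?_, ?_, ?_⟩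
  · exact (hperm.nodup_iff.mpr (Finset.nodup_toList _)).map Subtype.coe_injective
  · intro v
    simp only [List.mem_map, hperm.mem_iff]
    constructor
    · rintro ⟨a, -, rfl⟩; exact a.2
    · intro hv
      exact ⟨⟨v, hv⟩, by simp [l0, Finset.mem_toList], rfl⟩
  · have := List.pairwise_mergeSort (le := le) htr hto l0
    rw [List.pairwise_map]
    exact this.imp (fun h => by simpa [le, decide_eq_true_eq] using h)

theorem statement_19 {V : Type*} [Fintype V] (R : SimpleGraph V)
    (h : IsRing6On R Set.univ) :
    R.chromaticNumber = (cliqueNumber R : ℕ∞) := by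
  classical
  obtain ⟨X, hUnion, hDisj, hNe, hCliq, hSub, -, hChain⟩ := h
  set ω := cliqueNumber R with hωdef
  have hbdd : BddAbove {n | ∃ T : Finset V, R.IsNClique n T} := by
    refine ⟨Fintype.card V, ?_⟩
    rintro n ⟨T, hT⟩
    exact hT.2 ▸ T.card_le_univ
  have hclle : ∀ (T : Finset V), R.IsClique ↑T → T.card ≤ ω := by
    intro T hT
    exact le_csSup hbdd ⟨T, hT, rfl⟩
  have hXclique : ∀ i, R.IsClique (X i) := by
    intro i u hu v hv huv
    rcases (hCliq i u hu hv).2 with h' | h'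
    · exact absurd h'.symm huv
    · exact h'
  have hsorted : ∀ i : ZMod 6, ∃ L : List V, L.Nodup ∧ (∀ v, v ∈ L ↔ v ∈ X i) ∧
      L.Pairwise (fun u v => cnbr R Set.univ v ⊆ cnbr R Set.univ u) := by
    intro i
    obtain ⟨L, h1, h2, h3⟩ := exists_sorted_list ((X i).toFinset)
      (fun u v => cnbr R Set.univ v ⊆ cnbr R Set.univ u)
      (fun a b c hab hbc => hbc.trans hab)
      (fun u hu v hv => (hChain i v (by simpa using hv) u (by simpa using hu)))
    exact ⟨L, h1, fun v => (h2 v).trans (by simp), h3⟩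
  choose L hLnd hLmem hLpw using hsorted
  have hex : ∀ v : V, ∃ i, v ∈ X i := by
    intro v
    have : v ∈ ⋃ i, X i := hUnion.symm ▸ Set.mem_univ v
    exact Set.mem_iUnion.mp this
  choose idx hidx using hex
  have huniq : ∀ v i, v ∈ X i → idx v = i := by
    intro v i hv
    by_contra hne
    exact Set.disjoint_left.mp (hDisj _ _ hne) (hidx v) hv
  set rank : V → ℕ := fun v => (L (idx v)).idxOf v with hrank
  have hvmem : ∀ v, v ∈ L (idx v) := fun v => (hLmem _ v).mpr (hidx v)
  have hrlt : ∀ v, rank v < (L (idx v)).length := fun v =>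
    List.idxOf_lt_length_iff.mpr (hvmem v)
  have hlen_le : ∀ i, (L i).length ≤ ω := by
    intro i
    have hnd := hLnd i
    have hset : ((L i).toFinset : Set V) = X i := by
      ext v; simp [hLmem i v]
    have hcl : R.IsClique ((L i).toFinset : Set V) := hset ▸ hXclique i
    have := hclle _ hcl
    rwa [List.toFinset_card_of_nodup hnd] at this
  -- monotone neighborhoods on prefixes
  have hpre : ∀ v, ∀ a ∈ (L (idx v)).take (rank v + 1),
      cnbr R Set.univ v ⊆ cnbr R Set.univ a := by
    intro v a ha
    obtain ⟨j, hj, hja⟩ := List.mem_iff_getElem.mp ha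
    have hj' : j < min (rank v + 1) (L (idx v)).length := by simpa using hj
    have hjlen : j < (L (idx v)).length := lt_of_lt_of_le hj' (min_le_right _ _)
    have hjr : j ≤ rank v := by omega
    have hgv : (L (idx v))[rank v]'(hrlt v) = v := List.getElem_idxOf (hrlt v)
    rw [List.getElem_take] at hja
    rcases eq_or_lt_of_le hjr with heq | hlt
    · subst heq
      have hav : v = a := hgv.symm.trans hja
      rw [hav]
    · have hp := (List.pairwise_iff_getElem.mp (hLpw (idx v))) j (rank v) hjlen (hrlt v) hlt
      rw [hja, hgv] at hp
      exact hp
  have hpreX : ∀ (i : ZMod 6) (n : ℕ), ∀ a ∈ (L i).take n, a ∈ X i := by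
    intro i n a ha
    exact (hLmem i a).mp (List.mem_of_mem_take ha)
  -- key clique bound
  have hkey : ∀ v w, R.Adj v w → idx w = idx v + 1 → rank v + rank w + 2 ≤ ω := by
    intro v w hadj hiw
    have hne6 : idx v ≠ idx w := by
      rw [hiw]
      intro hh
      exact absurd (left_eq_add.mp hh) (by decide)
    have hPX : ∀ a ∈ ((L (idx v)).take (rank v + 1)).toFinset, a ∈ X (idx v) :=
      fun a ha => hpreX _ _ a (List.mem_toFinset.mp ha)
    have hQX : ∀ a ∈ ((L (idx w)).take (rank w + 1)).toFinset, a ∈ X (idx w) :=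
      fun a ha => hpreX _ _ a (List.mem_toFinset.mp ha)
    have hcross : ∀ a ∈ ((L (idx v)).take (rank v + 1)).toFinset,
        ∀ b ∈ ((L (idx w)).take (rank w + 1)).toFinset, R.Adj a b := by
      intro a ha b hb
      have hcnv := hpre v a (List.mem_toFinset.mp ha)
      have hcnw := hpre w b (List.mem_toFinset.mp hb)
      have haw : R.Adj a w := by
        have hw : w ∈ cnbr R Set.univ a := hcnv ⟨trivial, Or.inr hadj⟩
        rcases hw.2 with h' | h'
        · exfalso
          have hwX : w ∈ X (idx v) := by rw [h']; exact hPX a ha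
          exact Set.disjoint_left.mp (hDisj _ _ hne6) hwX (hidx w)
        · exact h'
      have hab : a ∈ cnbr R Set.univ b := hcnw ⟨trivial, Or.inr haw.symm⟩
      rcases hab.2 with h' | h'
      · exfalso
        have haX : a ∈ X (idx w) := by rw [h']; exact hQX b hb
        exact Set.disjoint_left.mp (hDisj _ _ hne6) (hPX a ha) haX
      · exact h'.symm
    have hPQdisj : Disjoint ((L (idx v)).take (rank v + 1)).toFinset
        ((L (idx w)).take (rank w + 1)).toFinset := by
      rw [Finset.disjoint_left]
      intro a haP haQ
      exact Set.disjoint_left.mp (hDisj _ _ hne6) (hPX a haP) (hQX a haQ)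
    have hclique : R.IsClique ↑(((L (idx v)).take (rank v + 1)).toFinset ∪
        ((L (idx w)).take (rank w + 1)).toFinset) := by
      intro a ha b hb hne
      simp only [Finset.coe_union, Set.mem_union, Finset.mem_coe] at ha hb
      rcases ha with ha | ha <;> rcases hb with hb | hb
      · exact hXclique _ (hPX a ha) (hPX b hb) hne
      · exact hcross a ha b hb
      · exact (hcross b hb a ha).symm
      · exact hXclique _ (hQX a ha) (hQX b hb) hne
    have hcard : (((L (idx v)).take (rank v + 1)).toFinset ∪
        ((L (idx w)).take (rank w + 1)).toFinset).card = rank v + rank w + 2 := by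
      rw [Finset.card_union_of_disjoint hPQdisj,
        List.toFinset_card_of_nodup ((hLnd _).sublist (List.take_sublist _ _)),
        List.toFinset_card_of_nodup ((hLnd _).sublist (List.take_sublist _ _)),
        List.length_take, List.length_take]
      have h1 := hrlt v
      have h2 := hrlt w
      omega
    have := hclle _ hclique
    omega
  -- adjacency classification
  have hadjcl : ∀ v w, R.Adj v w →
      idx w = idx v ∨ idx w = idx v + 1 ∨ idx v = idx w + 1 := by
    intro v w hadj
    have hw : w ∈ cnbr R Set.univ v := ⟨trivial, Or.inr hadj⟩
    rcases hSub (idx v) v (hidx v) hw with (h' | h') | h'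
    · right; right
      rw [huniq w _ h']; ring
    · left; exact huniq w _ h'
    · right; left; exact huniq w _ h'
  have hω1 : 1 ≤ ω := by
    obtain ⟨x, hx⟩ := hNe 0
    have hcl : R.IsClique (↑({x} : Finset V)) := by
      simp [SimpleGraph.isClique_iff, Set.pairwise_singleton]
    simpa using hclle {x} hcl
  have hrinj : ∀ v w, idx v = idx w → rank v = rank w → v = w := by
    intro v w hi hr
    have hwmem : w ∈ L (idx v) := by rw [hi]; exact hvmem w
    have hr' : (L (idx v)).idxOf v = (L (idx v)).idxOf w := by
      conv_rhs => rw [hi]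
      exact hr
    exact (List.idxOf_inj (y := w) (hvmem v)).mp hr'
  -- the coloring
  set c : V → ℕ := fun v => if (idx v).val % 2 = 0 then rank v else ω - 1 - rank v with hc
  have hcv : ∀ v, c v = if (idx v).val % 2 = 0 then rank v else ω - 1 - rank v :=
    fun v => rfl
  have hcbound : ∀ v, c v < ω := by
    intro v
    have h1 := hrlt v
    have h2 := hlen_le (idx v)
    rw [hcv]
    by_cases hpar : (idx v).val % 2 = 0
    · rw [if_pos hpar]; omega
    · rw [if_neg hpar]; omega
  have hparity : ∀ i : ZMod 6, (i + 1).val % 2 = 0 ↔ ¬ (i.val % 2 = 0) := by decide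
  have hproper : ∀ v w, R.Adj v w → c v ≠ c w := by
    intro v w hadj hceq
    have hvw : v ≠ w := hadj.ne
    have hrv : rank v < ω := lt_of_lt_of_le (hrlt v) (hlen_le (idx v))
    have hrw : rank w < ω := lt_of_lt_of_le (hrlt w) (hlen_le (idx w))
    rw [hcv, hcv] at hceq
    rcases hadjcl v w hadj with hsame | hnext | hprev
    · have hr : rank v ≠ rank w := fun hr => hvw (hrinj v w hsame.symm hr)
      rw [hsame] at hceq
      by_cases hpar : (idx v).val % 2 = 0
      · rw [if_pos hpar, if_pos hpar] at hceq; omega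
      · rw [if_neg hpar, if_neg hpar] at hceq; omega
    · have hkb := hkey v w hadj hnext
      have hpar2 := hparity (idx v)
      rw [← hnext] at hpar2
      by_cases hpar : (idx v).val % 2 = 0
      · rw [if_pos hpar, if_neg (fun hh => (hpar2.mp hh) hpar)] at hceq; omega
      · rw [if_neg hpar, if_pos (hpar2.mpr hpar)] at hceq; omega
    · have hkb := hkey w v hadj.symm hprev
      have hpar2 := hparity (idx w)
      rw [← hprev] at hpar2
      by_cases hpar : (idx w).val % 2 = 0
      · rw [if_pos hpar, if_neg (fun hh => (hpar2.mp hh) hpar)] at hceq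
        omega
      · rw [if_neg hpar, if_pos (hpar2.mpr hpar)] at hceq
        omega
  have hcol : R.Colorable ω := by
    refine ⟨SimpleGraph.Coloring.mk (fun v => (⟨c v, hcbound v⟩ : Fin ω)) ?_⟩
    intro v w hadj
    simp only [ne_eq, Fin.mk.injEq]
    exact hproper v w hadj
  apply _root_.le_antisymm
  · exact hcol.chromaticNumber_le
  · have hne : {n | ∃ T : Finset V, R.IsNClique n T}.Nonempty :=
      ⟨0, ∅, by simp [SimpleGraph.isNClique_iff, SimpleGraph.isClique_iff]⟩
    have hmem : ω ∈ {n | ∃ T : Finset V, R.IsNClique n T} := Nat.sSup_mem hne hbdd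
    obtain ⟨T, hT⟩ := hmem
    have hle := hT.1.card_le_chromaticNumber
    rw [hT.2] at hle
    exact hle
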